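/- arXiv:1004.1127 — 4 statements merged into one kernel-verified Lean document; each statement's English description precedes it below -/
import Mathlib

section
/- For all integers q ≥ 2, all y ∈ (0, 1 - 1/q), and all ε ∈ (0, y): H_q^{-1}(y - ε) ≤ H_q^{-1}(y) - ε / log_q[(q-1)·(2/H_q^{-1}(y-ε) - 1)]. -/
/-- The `q`-ary entropy function. -/
noncomputable def qaryEntropy (q x : ℝ) : ℝ :=
  x * Real.logb q (q - 1) - x * Real.logb q x - (1 - x) * Real.logb q (1 - x)

lemma qaryEntropy_eq_real (q : ℕ) (x : ℝ) :
    qaryEntropy (q : ℝ) x = Real.qaryEntropy q x / Real.log q := by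
  simp only [qaryEntropy, Real.qaryEntropy, Real.binEntropy, Real.logb, Real.log_inv]
  push_cast
  ring

lemma qaryEntropy_hasDerivAt (q : ℕ) {x : ℝ} (h0 : x ≠ 0) (h1 : x ≠ 1) :
    HasDerivAt (qaryEntropy (q : ℝ))
      ((Real.log ((q : ℝ) - 1) + Real.log (1 - x) - Real.log x) / Real.log q) x := by
  have heq : qaryEntropy (q : ℝ) = fun x => Real.qaryEntropy q x / Real.log q :=
    funext (qaryEntropy_eq_real q)
  rw [heq]
  exact (Real.hasDerivAt_qaryEntropy h0 h1).div_const _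

/-- For all integers `q ≥ 2`, all `y ∈ (0, 1 - 1/q)` and all `ε ∈ (0, y)`:
`H_q⁻¹(y - ε) ≤ H_q⁻¹(y) - ε / log_q[(q-1)·(2/H_q⁻¹(y-ε) - 1)]`. -/
theorem qaryEntropy_inv_bound (q : ℕ) (hq : 2 ≤ q) (Hinv : ℝ → ℝ)
    (hmaps : ∀ t ∈ Set.Ioo (0 : ℝ) 1, Hinv t ∈ Set.Ioo 0 (1 - 1 / (q : ℝ)))
    (hleft : ∀ x ∈ Set.Ioo (0 : ℝ) (1 - 1 / (q : ℝ)), Hinv (qaryEntropy q x) = x)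
    (hright : ∀ t ∈ Set.Ioo (0 : ℝ) 1, qaryEntropy q (Hinv t) = t)
    (y ε : ℝ) (hy : y ∈ Set.Ioo (0 : ℝ) (1 - 1 / (q : ℝ))) (hε : ε ∈ Set.Ioo (0 : ℝ) y) :
    Hinv (y - ε) ≤ Hinv y - ε / Real.logb q (((q : ℝ) - 1) * (2 / Hinv (y - ε) - 1)) := by
  obtain ⟨hy0, hy1⟩ := hy
  obtain ⟨hε0, hεy⟩ := hε
  have hq2 : (2 : ℝ) ≤ (q : ℝ) := by exact_mod_cast hq
  have hq1 : (1 : ℝ) < (q : ℝ) := by linarith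
  have hlogq : 0 < Real.log q := Real.log_pos hq1
  have hqinv : 0 < 1 / (q : ℝ) := by positivity
  have hlt1 : 1 - 1 / (q : ℝ) < 1 := by linarith
  have hyIoo : y ∈ Set.Ioo (0 : ℝ) 1 := ⟨hy0, lt_trans hy1 hlt1⟩
  have hyεIoo : y - ε ∈ Set.Ioo (0 : ℝ) 1 := ⟨by linarith, by linarith⟩
  set a := Hinv (y - ε) with ha_def
  set b := Hinv y with hb_def
  obtain ⟨ha0, ha1⟩ := hmaps _ hyεIoo
  obtain ⟨hb0, hb1⟩ := hmaps _ hyIoo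
  have ha1' : a < 1 := lt_trans ha1 hlt1
  have hb1' : b < 1 := lt_trans hb1 hlt1
  have hHa : qaryEntropy q a = y - ε := hright _ hyεIoo
  have hHb : qaryEntropy q b = y := hright _ hyIoo
  -- derivative positivity on the interval
  have hderiv : ∀ x ∈ Set.Ioo (0 : ℝ) (1 - 1 / (q : ℝ)),
      HasDerivAt (qaryEntropy (q : ℝ))
        ((Real.log ((q : ℝ) - 1) + Real.log (1 - x) - Real.log x) / Real.log q) x := by
    intro x hx
    exact qaryEntropy_hasDerivAt q (ne_of_gt hx.1) (by rcases hx with ⟨_, h⟩; intro h1; nlinarith)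
  have hpos : ∀ x ∈ Set.Ioo (0 : ℝ) (1 - 1 / (q : ℝ)),
      0 < (Real.log ((q : ℝ) - 1) + Real.log (1 - x) - Real.log x) / Real.log q := by
    intro x hx
    obtain ⟨hx0, hx1⟩ := hx
    have hx1' : x < 1 := lt_trans hx1 hlt1
    have hlt : x < ((q : ℝ) - 1) * (1 - x) := by
      have : x * (q : ℝ) < (q : ℝ) - 1 := by
        rw [show (1 : ℝ) - 1 / q = (q - 1) / q by field_simp] at hx1
        calc x * (q : ℝ) < ((q : ℝ) - 1) / q * q := by
              exact mul_lt_mul_of_pos_right hx1 (by linarith)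
          _ = (q : ℝ) - 1 := by field_simp
      nlinarith
    have hlog : Real.log x < Real.log (((q : ℝ) - 1) * (1 - x)) := Real.log_lt_log hx0 hlt
    rw [Real.log_mul (by linarith) (by linarith)] at hlog
    have : 0 < Real.log ((q : ℝ) - 1) + Real.log (1 - x) - Real.log x := by linarith
    positivity
  -- strict monotonicity
  have hmono : StrictMonoOn (qaryEntropy (q : ℝ)) (Set.Ioo 0 (1 - 1 / (q : ℝ))) := by
    apply strictMonoOn_of_deriv_pos (convex_Ioo _ _)
    · intro x hx
      exact ((hderiv x hx).differentiableAt).continuousAt.continuousWithinAt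
    · intro x hx
      rw [interior_Ioo] at hx
      rw [(hderiv x hx).deriv]
      exact hpos x hx
  have hab : a < b := by
    have := hmono.lt_iff_lt (a := a) (b := b) ⟨ha0, ha1⟩ ⟨hb0, hb1⟩
    rw [hHa, hHb] at this
    exact this.mp (by linarith)
  -- mean value theorem
  obtain ⟨c, hc, hceq⟩ := exists_hasDerivAt_eq_slope (qaryEntropy (q : ℝ))
    (fun x => (Real.log ((q : ℝ) - 1) + Real.log (1 - x) - Real.log x) / Real.log q) hab
    (fun x hx => HasDerivAt.differentiableAt
      (hderiv x ⟨lt_of_lt_of_le ha0 hx.1, lt_of_le_of_lt hx.2 hb1⟩)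
      |>.continuousAt.continuousWithinAt)
    (fun x hx => hderiv x ⟨lt_trans ha0 hx.1, lt_trans hx.2 hb1⟩)
  rw [hHa, hHb] at hceq
  have hca : a < c := hc.1
  have hcb : c < b := hc.2
  have hc0 : 0 < c := lt_trans ha0 hca
  have hc1 : c < 1 := lt_trans hcb hb1'
  -- the bound D
  set X := ((q : ℝ) - 1) * (2 / a - 1) with hX_def
  have h2a : 1 < 2 / a - 1 := by
    have : 1 < 1 / a := by rw [lt_div_iff₀ ha0]; linarith
    have h2 : 2 / a = 2 * (1 / a) := by ring
    rw [h2]; linarith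
  have hX1 : 1 < X := by nlinarith
  have hD : 0 < Real.logb q X := Real.logb_pos hq1 hX1
  -- f'(c) ≤ D
  have hnum : Real.log ((q : ℝ) - 1) + Real.log (1 - c) - Real.log c ≤ Real.log X := by
    have hfrac : (1 - c) / c ≤ 2 / a - 1 := by
      rw [show (2 : ℝ) / a - 1 = (2 - a) / a by rw [sub_div, div_self (show a ≠ 0 from ha0.ne')]]
      rw [div_le_div_iff₀ hc0 ha0]
      nlinarith
    have harg : 0 < (1 - c) / c := div_pos (by linarith) hc0
    have hmul : ((q : ℝ) - 1) * ((1 - c) / c) ≤ X :=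
      mul_le_mul_of_nonneg_left hfrac (by linarith)
    have := Real.log_le_log (mul_pos (by linarith) harg) hmul
    rw [Real.log_mul (by linarith) (ne_of_gt harg),
      Real.log_div (by linarith) (ne_of_gt hc0)] at this
    linarith
  have hfc_le : (Real.log ((q : ℝ) - 1) + Real.log (1 - c) - Real.log c) / Real.log q
      ≤ Real.logb q X := by
    rw [Real.logb]
    exact div_le_div_of_nonneg_right hnum hlogq.le |>.trans_eq rfl
  -- conclude
  have hslope : ε / (b - a) ≤ Real.logb q X := by
    have : (y - (y - ε)) / (b - a) = ε / (b - a) := by ring_nf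
    rw [← this, ← hceq]
    exact hfc_le
  have hba : 0 < b - a := by linarith
  have hεle : ε ≤ Real.logb q X * (b - a) := by
    rwa [div_le_iff₀ hba] at hslope
  have : ε / Real.logb q X ≤ b - a := by
    rw [div_le_iff₀ hD]; linarith [hεle]
  linarith
end

section
/- For any integer q ≥ 2 and any y with 0 ≤ y < 1, the minimum over θ ∈ [0, y] of (1/(1-θ))·H_q^{-1}(1-θ) is attained at θ = y, i.e., min_{0 ≤ θ ≤ y} H_q^{-1}(1-θ)/(1-θ) = H_q^{-1}(1-y)/(1-y). -/
lemma qe_eq (q : ℕ) (x : ℝ) :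
    qaryEntropy q x = (Real.log q)⁻¹ * Real.qaryEntropy q x := by
  unfold qaryEntropy Real.qaryEntropy Real.binEntropy
  rw [Real.logb, Real.logb, Real.logb, Real.log_inv, Real.log_inv]
  push_cast
  ring

lemma qe_strictMono (q : ℕ) (hq : 2 ≤ q) :
    StrictMonoOn (qaryEntropy q) (Set.Icc 0 (1 - 1 / (q : ℝ))) := by
  have hlogq : 0 < Real.log q := Real.log_pos (by exact_mod_cast hq)
  intro a ha b hb hab
  rw [qe_eq, qe_eq]
  have := Real.qaryEntropy_strictMonoOn hq (by simpa using ha) (by simpa using hb) hab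
  exact mul_lt_mul_of_pos_left this (by positivity)

lemma qe_concave (q : ℕ) (hq : 2 ≤ q) :
    ConcaveOn ℝ (Set.Icc 0 1) (qaryEntropy q) := by
  have hlogq : 0 < Real.log q := Real.log_pos (by exact_mod_cast hq)
  have h := (Real.strictConcaveOn_qaryEntropy (q := q)).concaveOn.smul
    (c := (Real.log q)⁻¹) (by positivity)
  have : (fun x => qaryEntropy q x) = ((Real.log q)⁻¹ • Real.qaryEntropy q) := by
    funext x; simp [qe_eq, smul_eq_mul]
  rw [show (qaryEntropy q) = _ from this]; exact h

/-- Key ratio inequality: for `0 ≤ a ≤ b ≤ 1 - 1/q`,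
`a * H(b) ≤ b * H(a)` (i.e. `H(x)/x` nonincreasing). -/
lemma qe_ratio (q : ℕ) (hq : 2 ≤ q) {a b : ℝ} (ha : 0 ≤ a) (hab : a ≤ b)
    (hb : b ≤ 1 - 1 / (q : ℝ)) :
    a * qaryEntropy q b ≤ b * qaryEntropy q a := by
  rcases eq_or_lt_of_le (ha.trans hab) with h | hbpos
  · have : a = 0 := le_antisymm (hab.trans h.symm.le) ha
    simp [this, ← h]
  have hb1 : b ≤ 1 := hb.trans (by
    have : (0:ℝ) ≤ 1 / (q:ℝ) := by positivity
    linarith)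
  have hcon := (qe_concave q hq).2
    (Set.left_mem_Icc.mpr zero_le_one)
    (show b ∈ Set.Icc (0:ℝ) 1 from ⟨hbpos.le, hb1⟩)
    (show (0:ℝ) ≤ 1 - a / b by
      have : a / b ≤ 1 := (div_le_one hbpos).mpr hab
      linarith)
    (show (0:ℝ) ≤ a / b by positivity)
    (show (1 - a / b) + a / b = 1 by ring)
  have h0 : qaryEntropy q 0 = 0 := by simp [qaryEntropy]
  rw [smul_eq_mul, smul_eq_mul, smul_eq_mul, smul_eq_mul, mul_zero, zero_add, h0,
    mul_zero, zero_add] at hcon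
  have : a / b * b = a := div_mul_cancel₀ a hbpos.ne'
  rw [this] at hcon
  calc a * qaryEntropy q b = b * (a / b * qaryEntropy q b) := by
        field_simp
      _ ≤ b * qaryEntropy q a := by
        exact mul_le_mul_of_nonneg_left hcon hbpos.le

/-- For any integer `q ≥ 2` and any `0 ≤ y < 1`, the minimum over `θ ∈ [0, y]` of
`H_q⁻¹(1-θ)/(1-θ)` is attained at `θ = y`:
`min_{0 ≤ θ ≤ y} H_q⁻¹(1-θ)/(1-θ) = H_q⁻¹(1-y)/(1-y)`. -/
theorem qaryEntropy_inv_min (q : ℕ) (hq : 2 ≤ q) (Hinv : ℝ → ℝ)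
    (hmaps : ∀ t ∈ Set.Icc (0 : ℝ) 1, Hinv t ∈ Set.Icc 0 (1 - 1 / (q : ℝ)))
    (hleft : ∀ x ∈ Set.Icc (0 : ℝ) (1 - 1 / (q : ℝ)), Hinv (qaryEntropy q x) = x)
    (hright : ∀ t ∈ Set.Icc (0 : ℝ) 1, qaryEntropy q (Hinv t) = t)
    (y : ℝ) (hy0 : 0 ≤ y) (hy1 : y < 1) :
    IsLeast ((fun θ : ℝ => Hinv (1 - θ) / (1 - θ)) '' Set.Icc 0 y)
      (Hinv (1 - y) / (1 - y)) := by
  constructor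
  · exact ⟨y, ⟨hy0, le_refl y⟩, rfl⟩
  · rintro v ⟨θ, ⟨hθ0, hθy⟩, rfl⟩
    -- names
    have hθ1 : θ < 1 := lt_of_le_of_lt hθy hy1
    have h1y : (1:ℝ) - y ∈ Set.Icc (0:ℝ) 1 := ⟨by linarith, by linarith⟩
    have h1θ : (1:ℝ) - θ ∈ Set.Icc (0:ℝ) 1 := ⟨by linarith, by linarith⟩
    set a := Hinv (1 - y) with ha_def
    set b := Hinv (1 - θ) with hb_def
    have hamem := hmaps _ h1y
    have hbmem := hmaps _ h1θ
    have hHa : qaryEntropy q a = 1 - y := hright _ h1y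
    have hHb : qaryEntropy q b = 1 - θ := hright _ h1θ
    -- a ≤ b by monotonicity of Hinv
    have hab : a ≤ b := by
      by_contra h
      push_neg at h
      have := qe_strictMono q hq hbmem hamem h
      rw [hHa, hHb] at this
      linarith
    have key : a * (1 - θ) ≤ b * (1 - y) := by
      rw [← hHb, ← hHa]
      exact qe_ratio q hq hamem.1 hab hbmem.2
    rw [div_le_div_iff₀ (by linarith) (by linarith)]
    exact key
end

section
/- Let q be a prime. The number of ordered ℓ-tuples (g_1, …, g_ℓ) of vectors in F_q^{2n} that are linearly independent and pairwise symplectically orthogonal (⟨g_i, g_j⟩ = 0 for all i, j) equals ∏_{i=0}^{ℓ-1} (q^{2n-i} - q^i), for 1 ≤ ℓ ≤ n. -/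
/-- The standard symplectic form on `F^n × F^n`:
`⟨(u,v),(u',v')⟩ = u·v' - v·u'`. -/
def sympForm {F : Type*} [CommRing F] {n : ℕ}
    (x y : (Fin n → F) × (Fin n → F)) : F :=
  ∑ i, (x.1 i * y.2 i - x.2 i * y.1 i)

open Module Submodule Finset

section helpers
variable {F : Type*} [CommRing F] {n : ℕ}

lemma sympForm_self (x : (Fin n → F) × (Fin n → F)) : sympForm x x = 0 := by
  simp [sympForm, mul_comm]

lemma sympForm_neg_comm (x y : (Fin n → F) × (Fin n → F)) :
    sympForm y x = - sympForm x y := by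
  unfold sympForm
  rw [← Finset.sum_neg_distrib]
  exact Finset.sum_congr rfl fun i _ => by ring

def sympB (F : Type*) [CommRing F] (n : ℕ) :
    LinearMap.BilinForm F ((Fin n → F) × (Fin n → F)) :=
  LinearMap.mk₂ F sympForm
    (fun x x' y => by
      unfold sympForm
      rw [← Finset.sum_add_distrib]
      exact Finset.sum_congr rfl fun i _ => by
        simp [Prod.fst_add, Prod.snd_add]; ring)
    (fun c x y => by
      unfold sympForm
      rw [smul_eq_mul, Finset.mul_sum]
      exact Finset.sum_congr rfl fun i _ => by
        simp [Prod.smul_fst, Prod.smul_snd]; ring)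
    (fun x y y' => by
      unfold sympForm
      rw [← Finset.sum_add_distrib]
      exact Finset.sum_congr rfl fun i _ => by
        simp [Prod.fst_add, Prod.snd_add]; ring)
    (fun c x y => by
      unfold sympForm
      rw [smul_eq_mul, Finset.mul_sum]
      exact Finset.sum_congr rfl fun i _ => by
        simp [Prod.smul_fst, Prod.smul_snd]; ring)

@[simp] lemma sympB_apply (x y : (Fin n → F) × (Fin n → F)) :
    sympB F n x y = sympForm x y := rfl

end helpers

section field

open Classical in
lemma sympB_nondeg (q n : ℕ) [Fact q.Prime] :
    (sympB (ZMod q) n).Nondegenerate := by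
  refine (LinearMap.IsRefl.nondegenerate_iff_separatingLeft (fun x y h => by
    rw [sympB_apply] at h ⊢; rw [sympForm_neg_comm, h, neg_zero])).mpr ?_
  intro x hx
  have h1 : ∀ i, x.1 i = 0 := fun i => by
    have := hx (0, Pi.single i 1)
    simpa [sympForm, Pi.single_apply, mul_ite, Finset.sum_ite_eq'] using this
  have h2 : ∀ i, x.2 i = 0 := fun i => by
    have := hx (Pi.single i 1, 0)
    simpa [sympForm, Pi.single_apply, mul_ite, Finset.sum_ite_eq', neg_eq_zero] using this
  exact Prod.ext (funext h1) (funext h2)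

lemma sympB_refl (q n : ℕ) : (sympB (ZMod q) n).IsRefl := fun x y h => by
  rw [sympB_apply] at h ⊢
  rw [sympForm_neg_comm, h, neg_zero]

lemma finrank_V (q n : ℕ) [Fact q.Prime] :
    Module.finrank (ZMod q) ((Fin n → ZMod q) × (Fin n → ZMod q)) = 2 * n := by
  rw [Module.finrank_prod, Module.finrank_fin_fun, two_mul]

lemma mem_orth_iff {q n m : ℕ} [Fact q.Prime]
    (g : Fin m → (Fin n → ZMod q) × (Fin n → ZMod q)) (v) :
    v ∈ (sympB (ZMod q) n).orthogonal (span (ZMod q) (Set.range g)) ↔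
      ∀ j, sympForm (g j) v = 0 := by
  rw [LinearMap.BilinForm.mem_orthogonal_iff]
  constructor
  · intro h j
    exact h (g j) (subset_span (Set.mem_range_self j))
  · intro h x hx
    refine span_induction (p := fun x _ => sympB (ZMod q) n x v = 0) ?_ ?_ ?_ ?_ hx
    · rintro _ ⟨j, rfl⟩; exact h j
    · simp
    · intro a b _ _ ha hb; simp [ha, hb]
    · intro c a _ ha; simp [ha]

lemma fiber_card (q n m : ℕ) [Fact q.Prime]
    (g : Fin m → (Fin n → ZMod q) × (Fin n → ZMod q))
    (hg : LinearIndependent (ZMod q) g)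
    (hiso : ∀ i j, sympForm (g i) (g j) = 0) :
    Nat.card {v : (Fin n → ZMod q) × (Fin n → ZMod q) //
        (∀ j, sympForm (g j) v = 0) ∧ v ∉ span (ZMod q) (Set.range g)}
      = q ^ (2 * n - m) - q ^ m := by
  classical
  set W : Submodule (ZMod q) ((Fin n → ZMod q) × (Fin n → ZMod q)) :=
    span (ZMod q) (Set.range g) with hW
  set P : Submodule (ZMod q) ((Fin n → ZMod q) × (Fin n → ZMod q)) :=
    (sympB (ZMod q) n).orthogonal W with hP
  have hWP : W ≤ P := by
    rw [hW, span_le]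
    rintro _ ⟨i, rfl⟩
    exact (mem_orth_iff g (g i)).mpr fun j => hiso j i
  have hfrW : Module.finrank (ZMod q) W = m := by
    rw [hW, finrank_span_eq_card hg, Fintype.card_fin]
  have hfrP : Module.finrank (ZMod q) P = 2 * n - m := by
    rw [hP, LinearMap.BilinForm.finrank_orthogonal (sympB_nondeg q n),
      finrank_V, hfrW]
  have hcW : Fintype.card W = q ^ m := by
    rw [card_eq_pow_finrank (K := ZMod q) (V := W), ZMod.card, hfrW]
  have hcP : Fintype.card P = q ^ (2 * n - m) := by
    rw [card_eq_pow_finrank (K := ZMod q) (V := P), ZMod.card, hfrP]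
  have key : Nat.card {v : (Fin n → ZMod q) × (Fin n → ZMod q) //
        (∀ j, sympForm (g j) v = 0) ∧ v ∉ W}
      = Nat.card {v : (Fin n → ZMod q) × (Fin n → ZMod q) // v ∈ P ∧ v ∉ W} :=
    Nat.card_congr (Equiv.subtypeEquivRight fun v => by
      rw [hP, mem_orth_iff g v])
  rw [key, Nat.card_eq_fintype_card, Fintype.card_subtype]
  have hsub : Finset.univ.filter (· ∈ W) ⊆ Finset.univ.filter (· ∈ P) := by
    intro v hv
    simp only [Finset.mem_filter, Finset.mem_univ, true_and] at hv ⊢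
    exact hWP hv
  have hsplit : Finset.univ.filter
        (fun v : (Fin n → ZMod q) × (Fin n → ZMod q) => v ∈ P ∧ v ∉ W)
      = Finset.univ.filter (· ∈ P) \ Finset.univ.filter (· ∈ W) := by
    ext v; simp [and_comm]
  have hP' : Nat.card {v : (Fin n → ZMod q) × (Fin n → ZMod q) // v ∈ P} = q ^ (2 * n - m) := by
    rw [Nat.card_eq_fintype_card]; exact hcP
  have hW' : Nat.card {v : (Fin n → ZMod q) × (Fin n → ZMod q) // v ∈ W} = q ^ m := by
    rw [Nat.card_eq_fintype_card]; exact hcW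
  rw [hsplit, Finset.card_sdiff_of_subset hsub, ← Fintype.card_subtype, ← Fintype.card_subtype,
    ← Nat.card_eq_fintype_card, ← Nat.card_eq_fintype_card, hP', hW']

lemma count_general (q n m : ℕ) [Fact q.Prime] :
    Nat.card {g : Fin m → (Fin n → ZMod q) × (Fin n → ZMod q) //
        LinearIndependent (ZMod q) g ∧ ∀ i j, sympForm (g i) (g j) = 0}
      = ∏ i ∈ Finset.range m, (q ^ (2 * n - i) - q ^ i) := by
  classical
  induction m with
  | zero =>
    haveI : Unique {g : Fin 0 → (Fin n → ZMod q) × (Fin n → ZMod q) //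
        LinearIndependent (ZMod q) g ∧ ∀ i j, sympForm (g i) (g j) = 0} :=
      ⟨⟨⟨default, linearIndependent_empty_type, fun i => i.elim0⟩⟩,
        fun a => Subtype.ext (Subsingleton.elim _ _)⟩
    rw [Finset.range_zero, Finset.prod_empty]
    exact Nat.card_unique
  | succ m ih =>
    let π : {g : Fin (m+1) → (Fin n → ZMod q) × (Fin n → ZMod q) //
          LinearIndependent (ZMod q) g ∧ ∀ i j, sympForm (g i) (g j) = 0} →
        {g : Fin m → (Fin n → ZMod q) × (Fin n → ZMod q) //
          LinearIndependent (ZMod q) g ∧ ∀ i j, sympForm (g i) (g j) = 0} := fun h =>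
      ⟨Fin.init h.1,
        h.2.1.comp Fin.castSucc (Fin.castSucc_injective m),
        fun i j => h.2.2 i.castSucc j.castSucc⟩
    haveI : ∀ i, Fintype {x // π x = i} := fun i => Fintype.ofFinite _
    have key : ∀ g, Nat.card {h // π h = g} = q ^ (2 * n - m) - q ^ m := by
      intro g
      have e : {h // π h = g} ≃ {v : (Fin n → ZMod q) × (Fin n → ZMod q) //
          (∀ j, sympForm (g.1 j) v = 0) ∧ v ∉ span (ZMod q) (Set.range g.1)} := by
        refine ⟨fun h => ⟨h.1.1 (Fin.last m), ?_, ?_⟩,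
          fun v => ⟨⟨Fin.snoc g.1 v.1, ?_, ?_⟩, ?_⟩, ?_, ?_⟩
        · have hg1 : Fin.init h.1.1 = g.1 := congrArg Subtype.val h.2
          intro j
          rw [← hg1]
          exact h.1.2.2 j.castSucc (Fin.last m)
        · have hg1 : Fin.init h.1.1 = g.1 := congrArg Subtype.val h.2
          have hli := h.1.2.1
          rw [← Fin.snoc_init_self h.1.1] at hli
          rw [← hg1]
          exact (linearIndependent_fin_snoc.mp hli).2
        · exact linearIndependent_fin_snoc.mpr ⟨g.2.1, v.2.2⟩
        · intro i j
          refine Fin.lastCases ?_ (fun i' => ?_) i <;>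
            refine Fin.lastCases ?_ (fun j' => ?_) j <;>
            simp only [Fin.snoc_last, Fin.snoc_castSucc]
          · exact sympForm_self _
          · rw [sympForm_neg_comm, v.2.1 j', neg_zero]
          · exact v.2.1 i'
          · exact g.2.2 i' j'
        · exact Subtype.ext (Fin.init_snoc (α := fun _ => (Fin n → ZMod q) × (Fin n → ZMod q)) (x := v.1) (p := g.1))
        · intro h
          apply Subtype.ext
          apply Subtype.ext
          have hg1 : Fin.init h.1.1 = g.1 := congrArg Subtype.val h.2
          show Fin.snoc g.1 (h.1.1 (Fin.last m)) = h.1.1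
          rw [← hg1, Fin.snoc_init_self]
        · intro v
          apply Subtype.ext
          exact Fin.snoc_last (α := fun _ : Fin (m+1) => (Fin n → ZMod q) × (Fin n → ZMod q)) v.1 g.1
      rw [Nat.card_congr e]
      exact fiber_card q n m g.1 g.2.1 g.2.2
    rw [Nat.card_congr (Equiv.sigmaFiberEquiv π).symm, Nat.card_eq_fintype_card,
      Fintype.card_sigma,
      Finset.sum_congr rfl (fun g _ => by rw [← Nat.card_eq_fintype_card, key g]),
      Finset.sum_const, Finset.card_univ, ← Nat.card_eq_fintype_card, smul_eq_mul,
      ih, Finset.prod_range_succ]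

end field


/-- For a prime `q` and `1 ≤ ℓ ≤ n`, the number of ordered `ℓ`-tuples of linearly
independent, pairwise symplectically orthogonal vectors in `F_q^{2n}` equals
`∏_{i=0}^{ℓ-1} (q^{2n-i} - q^i)`. -/
theorem count_isotropic_tuples (q n ℓ : ℕ) (hq : q.Prime) (h1 : 1 ≤ ℓ) (h2 : ℓ ≤ n) :
    Nat.card {g : Fin ℓ → (Fin n → ZMod q) × (Fin n → ZMod q) //
        LinearIndependent (ZMod q) g ∧ ∀ i j, sympForm (g i) (g j) = 0}
      = ∏ i ∈ Finset.range ℓ, (q ^ (2 * n - i) - q ^ i) := by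
  haveI : Fact q.Prime := ⟨hq⟩
  exact count_general q n ℓ
end

section
/- Let q be a prime, 1 ≤ ℓ ≤ n, and σ a nonzero vector in F_q^{2n}. If an ℓ-dimensional totally isotropic subspace S of F_q^{2n} (a stabilizer) is chosen uniformly at random, then the probability that σ lies in the symplectic centralizer S^⊥ = {x : ⟨x, s⟩ = 0 ∀s ∈ S} is at most q^{-ℓ}. -/
namespace SympAux

variable {F : Type*} [Field F] {n : ℕ}

abbrev V (F : Type*) [Field F] (n : ℕ) := (Fin n → F) × (Fin n → F)

/-- `sympForm` as a bilinear form. -/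
def Bf : V F n →ₗ[F] V F n →ₗ[F] F :=
  LinearMap.mk₂ F sympForm
    (by intro x x' y; simp only [sympForm, ← Finset.sum_add_distrib]
        exact Finset.sum_congr rfl fun i _ => by simp [Prod.fst_add, Prod.snd_add]; ring)
    (by intro a x y; simp only [sympForm, smul_eq_mul, Finset.mul_sum]
        exact Finset.sum_congr rfl fun i _ => by
          simp only [Prod.smul_fst, Prod.smul_snd, Pi.smul_apply, smul_eq_mul]; ring)
    (by intro x y y'; simp only [sympForm, ← Finset.sum_add_distrib]
        exact Finset.sum_congr rfl fun i _ => by simp [Prod.fst_add, Prod.snd_add]; ring)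
    (by intro a x y; simp only [sympForm, smul_eq_mul, Finset.mul_sum]
        exact Finset.sum_congr rfl fun i _ => by
          simp only [Prod.smul_fst, Prod.smul_snd, Pi.smul_apply, smul_eq_mul]; ring)

@[simp] lemma Bf_apply (x y : V F n) : Bf x y = sympForm x y := rfl

lemma Bf_self (x : V F n) : Bf x x = 0 := by
  simp [sympForm, mul_comm]

lemma Bf_skew (x y : V F n) : Bf x y = - Bf y x := by
  simp only [Bf_apply, sympForm, ← Finset.sum_neg_distrib]
  exact Finset.sum_congr rfl fun i _ => by ring

lemma Bf_refl : LinearMap.BilinForm.IsRefl (Bf (F := F) (n := n)) := by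
  intro x y h
  rw [Bf_skew, h, neg_zero]

lemma Bf_nondeg : LinearMap.BilinForm.Nondegenerate (Bf (F := F) (n := n)) := by
  refine (LinearMap.IsRefl.nondegenerate_iff_separatingLeft (fun x y h => Bf_refl x y h)).2 ?_
  intro x hx
  ext i
  · have := hx (0, Pi.single i 1)
    simpa [sympForm, Pi.single_apply, mul_ite, Finset.sum_ite_eq'] using this
  · have := hx (Pi.single i 1, 0)
    simp only [Bf_apply, sympForm] at this
    simpa [Pi.single_apply, mul_ite, Finset.sum_ite_eq'] using this

/-- Symplectic transvection `x ↦ x + (c * B x v) • v` as a linear map. -/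
def tvMap (v : V F n) (c : F) : V F n →ₗ[F] V F n :=
  LinearMap.id + LinearMap.smulRight (c • (Bf.flip v)) v

lemma tvMap_apply (v : V F n) (c : F) (x : V F n) :
    tvMap v c x = x + (c * Bf x v) • v := by
  simp [tvMap, LinearMap.smulRight_apply, smul_smul]

lemma tvMap_comp (v : V F n) (c : F) (x : V F n) :
    tvMap v (-c) (tvMap v c x) = x := by
  simp only [tvMap_apply, map_add, map_smul, LinearMap.add_apply, LinearMap.smul_apply,
    Bf_self, smul_eq_mul, mul_zero, add_zero, zero_smul]
  module

/-- Symplectic transvection as a linear equivalence. -/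
def tv (v : V F n) (c : F) : V F n ≃ₗ[F] V F n :=
  LinearEquiv.ofLinear (tvMap v c) (tvMap v (-c))
    (LinearMap.ext fun x => by have := tvMap_comp v (-c) x; rwa [neg_neg] at this)
    (LinearMap.ext fun x => tvMap_comp v c x)

lemma tv_preserves (v : V F n) (c : F) (x y : V F n) :
    Bf (tv v c x) (tv v c y) = Bf x y := by
  show Bf (tvMap v c x) (tvMap v c y) = Bf x y
  simp only [tvMap_apply, map_add, map_smul, LinearMap.add_apply, LinearMap.smul_apply]
  rw [Bf_self, Bf_skew v y]
  simp only [smul_eq_mul]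
  ring

lemma exists_equiv_of_pairing (σ σ' : V F n) (h : Bf σ σ' ≠ 0) :
    ∃ g : V F n ≃ₗ[F] V F n, (∀ x y, Bf (g x) (g y) = Bf x y) ∧ g σ = σ' := by
  refine ⟨tv (σ' - σ) (Bf σ σ')⁻¹, tv_preserves _ _, ?_⟩
  show tvMap _ _ σ = σ'
  rw [tvMap_apply, map_sub, Bf_self]
  rw [sub_zero, inv_mul_cancel₀ h, one_smul]
  abel

lemma exists_symp_equiv (σ σ' : V F n) (hσ : σ ≠ 0) (hσ' : σ' ≠ 0) :
    ∃ g : V F n ≃ₗ[F] V F n, (∀ x y, Bf (g x) (g y) = Bf x y) ∧ g σ = σ' := by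
  by_cases h : Bf σ σ' ≠ 0
  · exact exists_equiv_of_pairing σ σ' h
  push_neg at h
  have ha : ∃ a, Bf σ a ≠ 0 := by
    by_contra hc; push_neg at hc; exact hσ (Bf_nondeg.1 σ hc)
  have hb : ∃ b, Bf σ' b ≠ 0 := by
    by_contra hc; push_neg at hc; exact hσ' (Bf_nondeg.1 σ' hc)
  obtain ⟨a, ha⟩ := ha
  obtain ⟨b, hb⟩ := hb
  have hρ : ∃ ρ, Bf σ ρ ≠ 0 ∧ Bf σ' ρ ≠ 0 := by
    by_cases h1 : Bf σ' a ≠ 0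
    · exact ⟨a, ha, h1⟩
    by_cases h2 : Bf σ b ≠ 0
    · exact ⟨b, h2, hb⟩
    push_neg at h1 h2
    exact ⟨a + b, by rw [map_add, h2, add_zero]; exact ha,
      by rw [map_add, h1, zero_add]; exact hb⟩
  obtain ⟨ρ, h1, h2⟩ := hρ
  obtain ⟨g1, hg1, hg1'⟩ := exists_equiv_of_pairing σ ρ h1
  have h3 : Bf ρ σ' ≠ 0 := by rw [Bf_skew]; simpa using h2
  obtain ⟨g2, hg2, hg2'⟩ := exists_equiv_of_pairing ρ σ' h3
  refine ⟨g1.trans g2, fun x y => ?_, ?_⟩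
  · simp [LinearEquiv.trans_apply, hg2, hg1]
  · simp [LinearEquiv.trans_apply, hg1', hg2']


section Counting

variable {ℓ : ℕ}

/-- Transfer the numerator conditions along a symplectic equivalence. -/
lemma map_mem_num {g : V F n ≃ₗ[F] V F n} (hg : ∀ x y, Bf (g x) (g y) = Bf x y)
    {σ σ' : V F n} (hgσ : g σ = σ') {S : Submodule F (V F n)}
    (hS : Module.finrank F S = ℓ ∧ (∀ x ∈ S, ∀ y ∈ S, sympForm x y = 0) ∧
      ∀ s ∈ S, sympForm σ s = 0) :
    Module.finrank F (S.map (g : V F n →ₗ[F] V F n)) = ℓ ∧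
      (∀ x ∈ S.map (g : V F n →ₗ[F] V F n), ∀ y ∈ S.map (g : V F n →ₗ[F] V F n),
        sympForm x y = 0) ∧
      ∀ s ∈ S.map (g : V F n →ₗ[F] V F n), sympForm σ' s = 0 := by
  obtain ⟨h1, h2, h3⟩ := hS
  refine ⟨by rw [LinearEquiv.finrank_map_eq]; exact h1, ?_, ?_⟩
  · rintro x ⟨s, hs, rfl⟩ y ⟨t, ht, rfl⟩
    have := hg s t
    simp only [Bf_apply] at this
    simp only [LinearEquiv.coe_coe]
    rw [this]; exact h2 s hs t ht
  · rintro x ⟨s, hs, rfl⟩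
    have := hg σ s
    simp only [Bf_apply] at this
    simp only [LinearEquiv.coe_coe]
    rw [← hgσ, this]; exact h3 s hs

lemma card_num_eq (σ σ' : V F n) (hσ : σ ≠ 0) (hσ' : σ' ≠ 0) :
    Nat.card {S : Submodule F (V F n) //
        Module.finrank F S = ℓ ∧ (∀ x ∈ S, ∀ y ∈ S, sympForm x y = 0) ∧
        ∀ s ∈ S, sympForm σ s = 0}
      = Nat.card {S : Submodule F (V F n) //
        Module.finrank F S = ℓ ∧ (∀ x ∈ S, ∀ y ∈ S, sympForm x y = 0) ∧
        ∀ s ∈ S, sympForm σ' s = 0} := by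
  obtain ⟨g, hg, hgσ⟩ := exists_symp_equiv σ σ' hσ hσ'
  have hg' : ∀ x y, Bf (g.symm x) (g.symm y) = Bf x y := by
    intro x y
    conv_rhs => rw [← g.apply_symm_apply x, ← g.apply_symm_apply y, hg]
  have hgσ' : g.symm σ' = σ := by rw [← hgσ, g.symm_apply_apply]
  refine Nat.card_congr ⟨fun S => ⟨S.1.map (g : V F n →ₗ[F] V F n), map_mem_num hg hgσ S.2⟩,
    fun S => ⟨S.1.map (g.symm : V F n →ₗ[F] V F n), map_mem_num hg' hgσ' S.2⟩, ?_, ?_⟩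
  · intro S
    apply Subtype.ext
    exact (Submodule.map_symm_eq_iff g).2 rfl
  · intro S
    apply Subtype.ext
    exact (Submodule.map_symm_eq_iff g).1 rfl

end Counting


section Card

variable {ℓ : ℕ} [Fintype F] [DecidableEq F]

lemma finrank_V : Module.finrank F (V F n) = 2 * n := by
  simp [Module.finrank_prod, Module.finrank_fin_fun]
  ring

/-- card of `{w : W // w ≠ 0}` for a submodule `W`. -/
lemma card_submodule_ne_zero (W : Submodule F (V F n)) :
    Nat.card {w : W // w ≠ 0} = Fintype.card F ^ Module.finrank F W - 1 := by
  classical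
  haveI : Fintype W := Fintype.ofFinite W
  haveI : Fintype {w : W // w ≠ 0} := Fintype.ofFinite _
  rw [Nat.card_eq_fintype_card]
  have h0 : Fintype.card {w : W // w = 0} = 1 := by
    convert Fintype.card_subtype_eq (0 : W)
  have := Fintype.card_subtype_compl (fun w : W => w = 0)
  rw [h0] at this
  rw [Fintype.card_congr (Equiv.subtypeEquivRight (fun w => Iff.rfl)), this,
    Module.card_eq_pow_finrank (K := F) (V := W)]

lemma card_orth (S : Submodule F (V F n)) (hS : Module.finrank F S = ℓ) (hl : ℓ ≤ 2 * n) :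
    Nat.card {y : V F n // (∀ s ∈ S, sympForm y s = 0) ∧ y ≠ 0}
      = Fintype.card F ^ (2 * n - ℓ) - 1 := by
  classical
  set W := LinearMap.BilinForm.orthogonal Bf S with hW
  have hmem : ∀ y : V F n, (∀ s ∈ S, sympForm y s = 0) ↔ y ∈ W := by
    intro y
    rw [hW, LinearMap.BilinForm.mem_orthogonal_iff]
    constructor
    · intro h s hs
      rw [Bf_skew s y]
      have : Bf y s = 0 := h s hs
      rw [this, neg_zero]
    · intro h s hs
      have h2 : Bf s y = 0 := h s hs
      rw [Bf_skew s y] at h2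
      exact neg_eq_zero.mp h2
  have e : {y : V F n // (∀ s ∈ S, sympForm y s = 0) ∧ y ≠ 0} ≃ {w : W // w ≠ 0} :=
    { toFun := fun y => ⟨⟨y.1, (hmem y.1).1 y.2.1⟩, by
        simp only [ne_eq, Submodule.mk_eq_zero]; exact y.2.2⟩
      invFun := fun w => ⟨w.1.1, ⟨(hmem w.1.1).2 w.1.2, by
        intro h; apply w.2; exact Subtype.ext h⟩⟩
      left_inv := fun y => rfl
      right_inv := fun w => rfl }
  rw [Nat.card_congr e, card_submodule_ne_zero]
  congr 1
  rw [hW, LinearMap.BilinForm.finrank_orthogonal Bf_nondeg, finrank_V, hS]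

lemma card_ne_zero_vec :
    Nat.card {v : V F n // v ≠ 0} = Fintype.card F ^ (2 * n) - 1 := by
  have e : {v : V F n // v ≠ 0} ≃ {w : (⊤ : Submodule F (V F n)) // w ≠ 0} :=
    { toFun := fun v => ⟨⟨v.1, trivial⟩, fun h => v.2 (congrArg Subtype.val h)⟩
      invFun := fun w => ⟨w.1.1, by intro h; apply w.2; exact Subtype.ext h⟩
      left_inv := fun y => rfl
      right_inv := fun w => rfl }
  rw [Nat.card_congr e, card_submodule_ne_zero, finrank_top, finrank_V]

end Card


section Exists

variable {ℓ : ℕ}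

lemma exists_isotropic (hl : ℓ ≤ n) :
    ∃ S : Submodule F (V F n),
      Module.finrank F S = ℓ ∧ ∀ x ∈ S, ∀ y ∈ S, sympForm x y = 0 := by
  classical
  let φ : (Fin ℓ → F) →ₗ[F] V F n :=
    (LinearMap.inl F (Fin n → F) (Fin n → F)).comp
      (Function.ExtendByZero.linearMap F (Fin.castLE hl))
  have hinj : Function.Injective φ := by
    intro u v huv
    funext i
    have h1 := congrArg (fun z : V F n => z.1 (Fin.castLE hl i)) huv
    have h2 : Function.extend (Fin.castLE hl) u 0 (Fin.castLE hl i) =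
        Function.extend (Fin.castLE hl) v 0 (Fin.castLE hl i) := h1
    simpa [Function.Injective.extend_apply (Fin.castLE_injective hl)] using h2
  refine ⟨LinearMap.range φ, ?_, ?_⟩
  · rw [LinearMap.finrank_range_of_inj hinj, Module.finrank_fin_fun]
  · rintro x ⟨u, rfl⟩ y ⟨v, rfl⟩
    have hx2 : (φ u).2 = 0 := rfl
    have hy2 : (φ v).2 = 0 := rfl
    simp [sympForm, hx2, hy2]

end Exists


section Double

variable {ℓ : ℕ} [Fintype F] [DecidableEq F]

lemma sigma_card_const {ι : Type*} [Finite ι] (κ : ι → Type*) [∀ i, Finite (κ i)]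
    (c : ℕ) (h : ∀ i, Nat.card (κ i) = c) :
    Nat.card (Sigma κ) = Nat.card ι * c := by
  classical
  haveI := Fintype.ofFinite ι
  haveI : ∀ i, Fintype (κ i) := fun i => Fintype.ofFinite _
  rw [Nat.card_eq_fintype_card, Fintype.card_sigma, Nat.card_eq_fintype_card]
  have hc : ∀ i, Fintype.card (κ i) = c := fun i => by rw [← Nat.card_eq_fintype_card, h i]
  calc (∑ i, Fintype.card (κ i)) = ∑ _i : ι, c := Finset.sum_congr rfl fun i _ => hc i
    _ = Fintype.card ι * c := by simp [Finset.sum_const, Finset.card_univ]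

lemma double_count (σ : V F n) (hσ : σ ≠ 0) (hl : ℓ ≤ 2 * n) :
    Nat.card {S : Submodule F (V F n) //
        Module.finrank F S = ℓ ∧ (∀ x ∈ S, ∀ y ∈ S, sympForm x y = 0) ∧
        ∀ s ∈ S, sympForm σ s = 0} * (Fintype.card F ^ (2 * n) - 1)
      = Nat.card {S : Submodule F (V F n) //
          Module.finrank F S = ℓ ∧ ∀ x ∈ S, ∀ y ∈ S, sympForm x y = 0}
        * (Fintype.card F ^ (2 * n - ℓ) - 1) := by
  classical
  let κ₁ : {v : V F n // v ≠ 0} → Type _ := fun v =>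
    {S : Submodule F (V F n) //
      Module.finrank F S = ℓ ∧ (∀ x ∈ S, ∀ y ∈ S, sympForm x y = 0) ∧
      ∀ s ∈ S, sympForm v.1 s = 0}
  let κ₂ : {S : Submodule F (V F n) //
      Module.finrank F S = ℓ ∧ ∀ x ∈ S, ∀ y ∈ S, sympForm x y = 0} → Type _ := fun S =>
    {y : V F n // (∀ s ∈ S.1, sympForm y s = 0) ∧ y ≠ 0}
  have e : Sigma κ₁ ≃ Sigma κ₂ :=
    { toFun := fun p => ⟨⟨p.2.1, p.2.2.1, p.2.2.2.1⟩, ⟨p.1.1, p.2.2.2.2, p.1.2⟩⟩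
      invFun := fun p => ⟨⟨p.2.1, p.2.2.2⟩, ⟨p.1.1, p.1.2.1, p.1.2.2, p.2.2.1⟩⟩
      left_inv := fun p => rfl
      right_inv := fun p => rfl }
  have h1 : Nat.card (Sigma κ₁) =
      Nat.card {v : V F n // v ≠ 0} * Nat.card {S : Submodule F (V F n) //
        Module.finrank F S = ℓ ∧ (∀ x ∈ S, ∀ y ∈ S, sympForm x y = 0) ∧
        ∀ s ∈ S, sympForm σ s = 0} :=
    sigma_card_const κ₁ _ (fun v => card_num_eq v.1 σ v.2 hσ)
  have h2 : Nat.card (Sigma κ₂) =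
      Nat.card {S : Submodule F (V F n) //
          Module.finrank F S = ℓ ∧ ∀ x ∈ S, ∀ y ∈ S, sympForm x y = 0}
        * (Fintype.card F ^ (2 * n - ℓ) - 1) :=
    sigma_card_const κ₂ _ (fun S => card_orth S.1 S.2.1 hl)
  rw [← h2, ← Nat.card_congr e, h1, card_ne_zero_vec, mul_comm]

end Double

end SympAux

/-- For a prime `q`, `1 ≤ ℓ ≤ n`, and a nonzero `σ ∈ F_q^{2n}`: if an `ℓ`-dimensional
totally isotropic subspace `S` (a stabilizer) is chosen uniformly at random, the
probability that `σ` lies in the symplectic centralizer `S^⊥` is at most `q^{-ℓ}`. -/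
theorem prob_in_normalizer_le (q n ℓ : ℕ) (hq : q.Prime) (h1 : 1 ≤ ℓ) (h2 : ℓ ≤ n)
    (σ : (Fin n → ZMod q) × (Fin n → ZMod q)) (hσ : σ ≠ 0) :
    (Nat.card {S : Submodule (ZMod q) ((Fin n → ZMod q) × (Fin n → ZMod q)) //
          Module.finrank (ZMod q) S = ℓ ∧ (∀ x ∈ S, ∀ y ∈ S, sympForm x y = 0) ∧
          ∀ s ∈ S, sympForm σ s = 0} : ℝ)
      / (Nat.card {S : Submodule (ZMod q) ((Fin n → ZMod q) × (Fin n → ZMod q)) //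
          Module.finrank (ZMod q) S = ℓ ∧ ∀ x ∈ S, ∀ y ∈ S, sympForm x y = 0} : ℝ)
      ≤ (q : ℝ) ^ (-(ℓ : ℤ)) := by
  haveI : Fact q.Prime := ⟨hq⟩
  haveI : NeZero q := ⟨hq.pos.ne'⟩
  classical
  set a := Nat.card {S : Submodule (ZMod q) ((Fin n → ZMod q) × (Fin n → ZMod q)) //
          Module.finrank (ZMod q) S = ℓ ∧ (∀ x ∈ S, ∀ y ∈ S, sympForm x y = 0) ∧
          ∀ s ∈ S, sympForm σ s = 0} with ha
  set d := Nat.card {S : Submodule (ZMod q) ((Fin n → ZMod q) × (Fin n → ZMod q)) //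
          Module.finrank (ZMod q) S = ℓ ∧ ∀ x ∈ S, ∀ y ∈ S, sympForm x y = 0} with hd
  have hl2 : ℓ ≤ 2 * n := by omega
  have key : a * (q ^ (2 * n) - 1) = d * (q ^ (2 * n - ℓ) - 1) := by
    have := SympAux.double_count (F := ZMod q) (n := n) (ℓ := ℓ) σ hσ hl2
    rwa [ZMod.card q] at this
  have hd0 : 0 < d := by
    rw [hd]
    have := SympAux.exists_isotropic (F := ZMod q) (n := n) (ℓ := ℓ) h2
    obtain ⟨S, hS1, hS2⟩ := this
    haveI : Nonempty {S : Submodule (ZMod q) ((Fin n → ZMod q) × (Fin n → ZMod q)) //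
      Module.finrank (ZMod q) S = ℓ ∧ ∀ x ∈ S, ∀ y ∈ S, sympForm x y = 0} := ⟨⟨S, hS1, hS2⟩⟩
    exact Nat.card_pos
  have hq2 : 2 ≤ q := hq.two_le
  have hA2 : 2 ≤ q ^ (2 * n) := le_trans hq2 (Nat.le_self_pow (by omega) q)
  have hpow : q ^ (2 * n - ℓ) * q ^ ℓ = q ^ (2 * n) := by
    rw [← pow_add]; congr 1; omega
  have hnat : a * q ^ ℓ ≤ d := by
    have step : a * q ^ ℓ * (q ^ (2 * n) - 1) ≤ d * (q ^ (2 * n) - 1) := by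
      calc a * q ^ ℓ * (q ^ (2 * n) - 1) = a * (q ^ (2 * n) - 1) * q ^ ℓ := by ring
        _ = d * (q ^ (2 * n - ℓ) - 1) * q ^ ℓ := by rw [key]
        _ = d * ((q ^ (2 * n - ℓ) - 1) * q ^ ℓ) := by ring
        _ = d * (q ^ (2 * n) - q ^ ℓ) := by rw [Nat.sub_mul, one_mul, hpow]
        _ ≤ d * (q ^ (2 * n) - 1) := by
            exact Nat.mul_le_mul_left d (Nat.sub_le_sub_left (Nat.one_le_pow _ _ hq.pos) _)
    exact Nat.le_of_mul_le_mul_right step (by omega)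
  rw [zpow_neg, zpow_natCast]
  have hdR : (0 : ℝ) < (d : ℝ) := by exact_mod_cast hd0
  have hqR : (0 : ℝ) < (q : ℝ) ^ ℓ := by positivity
  rw [div_le_iff₀ hdR, inv_mul_eq_div, le_div_iff₀ hqR]
  exact_mod_cast hnat
end
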